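/- (Theorem 5.2, row-wise butterfly error bound.) Fix natural numbers L ≥ 1, lm ≤ L, m₀ ≥ 1, n₀ ≥ 1, a real ε ≥ 0, and a real matrix A of size (2^L·m₀) × (2^L·n₀). For 0 ≤ l ≤ lm, τ ∈ {0,…,2^l−1}, ν ∈ {0,…,2^{L−l}−1}, let K(l,τ,ν) be the (2^{L−l}·m₀) × (2^l·n₀) block of A with entries K(l,τ,ν)(i,j) = A(τ·2^{L−l}·m₀ + i, ν·2^l·n₀ + j). Suppose given ranks r(l,τ,ν) ∈ ℕ and matrices as follows: (a) for each ν ∈ {0,…,2^L−1}, a matrix V(0,0,ν) of size n₀ × r(0,0,ν) with orthonormal columns such that ‖K(0,0,ν) − K(0,0,ν)·V(0,0,ν)·V(0,0,ν)ᵀ‖_F ≤ ε·‖K(0,0,ν)‖_F; (b) for each l with 1 ≤ l ≤ lm and each τ ∈ {0,…,2^l−1}, ν ∈ {0,…,2^{L−l}−1}: letting G(l,τ,ν) = diag(V(l−1, ⌊τ/2⌋, 2ν), V(l−1, ⌊τ/2⌋, 2ν+1)), a transfer matrix W(l,τ,ν) of size (r(l−1,⌊τ/2⌋,2ν) + r(l−1,⌊τ/2⌋,2ν+1))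 × r(l,τ,ν) with orthonormal columns such that ‖K(l,τ,ν)·G(l,τ,ν) − K(l,τ,ν)·G(l,τ,ν)·W(l,τ,ν)·W(l,τ,ν)ᵀ‖_F ≤ ε·‖K(l,τ,ν)·G(l,τ,ν)‖_F, with V(l,τ,ν) defined as G(l,τ,ν)·W(l,τ,ν). Then for every l with 0 ≤ l ≤ lm: Σ_{τ<2^l} Σ_{ν<2^{L−l}} ‖K(l,τ,ν) − K(l,τ,ν)·V(l,τ,ν)·V(l,τ,ν)ᵀ‖_F² ≤ (l+1)·ε²·‖A‖_F². -/

import Mathlib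

open Matrix

/-- Frobenius norm of a real matrix. -/
noncomputable def frobNorm {α β : Type*} [Fintype α] [Fintype β] (A : Matrix α β ℝ) : ℝ :=
  Real.sqrt (∑ i, ∑ j, A i j ^ 2)

/-- Global row index of entry `i` of the `τ`-th row group at level `l`. -/
def rowIdx (L m₀ l τ : ℕ) (hl : l ≤ L) (hτ : τ < 2 ^ l)
    (i : Fin (2 ^ (L - l) * m₀)) : Fin (2 ^ L * m₀) :=
  ⟨τ * (2 ^ (L - l) * m₀) + i.1, by
    have h1 : τ * (2 ^ (L - l) * m₀) + i.1 < (τ + 1) * (2 ^ (L - l) * m₀) := by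
      rw [Nat.succ_mul]
      exact Nat.add_lt_add_left i.2 _
    have h2 : (τ + 1) * (2 ^ (L - l) * m₀) ≤ 2 ^ l * (2 ^ (L - l) * m₀) :=
      Nat.mul_le_mul_right _ hτ
    have h3 : 2 ^ l * (2 ^ (L - l) * m₀) = 2 ^ L * m₀ := by
      rw [← mul_assoc, ← pow_add]
      congr 2
      omega
    exact h1.trans_le (h2.trans_eq h3)⟩

/-- Global column index of entry `j` of the `ν`-th column group at level `l`. -/
def colIdx (L n₀ l ν : ℕ) (hl : l ≤ L) (hν : ν < 2 ^ (L - l))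
    (j : Fin (2 ^ l * n₀)) : Fin (2 ^ L * n₀) :=
  ⟨ν * (2 ^ l * n₀) + j.1, by
    have h1 : ν * (2 ^ l * n₀) + j.1 < (ν + 1) * (2 ^ l * n₀) := by
      rw [Nat.succ_mul]
      exact Nat.add_lt_add_left j.2 _
    have h2 : (ν + 1) * (2 ^ l * n₀) ≤ 2 ^ (L - l) * (2 ^ l * n₀) :=
      Nat.mul_le_mul_right _ hν
    have h3 : 2 ^ (L - l) * (2 ^ l * n₀) = 2 ^ L * n₀ := by
      rw [← mul_assoc, ← pow_add]
      congr 2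
      omega
    exact h1.trans_le (h2.trans_eq h3)⟩

/-- The `(τ,ν)` block of `A` at level `l`. -/
def blockOf {L m₀ n₀ : ℕ} (A : Matrix (Fin (2 ^ L * m₀)) (Fin (2 ^ L * n₀)) ℝ)
    (l τ ν : ℕ) (hl : l ≤ L) (hτ : τ < 2 ^ l) (hν : ν < 2 ^ (L - l)) :
    Matrix (Fin (2 ^ (L - l) * m₀)) (Fin (2 ^ l * n₀)) ℝ :=
  Matrix.of fun i j => A (rowIdx L m₀ l τ hl hτ i) (colIdx L n₀ l ν hl hν j)

/-- Splitting the columns of a level-`l` block (column-node `ν` at level `L-l`) into the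
columns of its two children `2ν` and `2ν+1` (blocks at level `l-1`). -/
def colSplit (n₀ l : ℕ) (hl : 1 ≤ l) :
    Fin (2 ^ l * n₀) ≃ Fin (2 ^ (l - 1) * n₀) ⊕ Fin (2 ^ (l - 1) * n₀) :=
  (finCongr (by
    have h2 : 2 ^ l = 2 ^ (l - 1) * 2 := by
      rw [← pow_succ]
      congr 1
      omega
    rw [h2]
    ring)).trans finSumFinEquiv.symm

section Aux

variable {α β γ δ α' β' : Type*} [Fintype α] [Fintype β] [Fintype γ] [Fintype δ]
  [Fintype α'] [Fintype β']

noncomputable def frobSq (A : Matrix α β ℝ) : ℝ := ∑ i, ∑ j, A i j ^ 2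

lemma frobSq_nonneg (A : Matrix α β ℝ) : 0 ≤ frobSq A :=
  Finset.sum_nonneg fun _ _ => Finset.sum_nonneg fun _ _ => sq_nonneg _

lemma frobSq_eq_trace (A : Matrix α β ℝ) : frobSq A = (Aᵀ * A).trace := by
  unfold frobSq
  rw [Matrix.trace, Finset.sum_comm]
  refine Finset.sum_congr rfl fun j _ => ?_
  simp [Matrix.diag, Matrix.mul_apply, sq]

lemma frobSq_add_of_orth (X Y : Matrix α β ℝ) (h : (Xᵀ * Y).trace = 0) :
    frobSq (X + Y) = frobSq X + frobSq Y := by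
  have h2 : (Yᵀ * X).trace = 0 := by
    have ht := Matrix.trace_transpose (Xᵀ * Y)
    rw [Matrix.transpose_mul, Matrix.transpose_transpose] at ht
    rw [ht, h]
  rw [frobSq_eq_trace, frobSq_eq_trace, frobSq_eq_trace, Matrix.transpose_add,
    Matrix.add_mul, Matrix.mul_add, Matrix.mul_add, Matrix.trace_add, Matrix.trace_add,
    Matrix.trace_add, h, h2]
  ring

lemma trace_orth_helper (D : Matrix α β ℝ) (Z : Matrix α γ ℝ) (G : Matrix β γ ℝ)
    (hDG : D * G = 0) : (Dᵀ * (Z * Gᵀ)).trace = 0 := by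
  rw [← Matrix.mul_assoc, Matrix.trace_mul_comm, ← Matrix.mul_assoc, ← Matrix.transpose_mul,
    hDG]
  simp

lemma frobSq_mul_orthT [DecidableEq γ] (Z : Matrix α γ ℝ) (G : Matrix β γ ℝ)
    (hG : Gᵀ * G = 1) : frobSq (Z * Gᵀ) = frobSq Z := by
  rw [frobSq_eq_trace, frobSq_eq_trace, Matrix.transpose_mul, Matrix.transpose_transpose,
    ← Matrix.mul_assoc, Matrix.trace_mul_comm, ← Matrix.mul_assoc, ← Matrix.mul_assoc, hG,
    Matrix.one_mul]

lemma sub_mul_G_eq_zero [DecidableEq γ] (X : Matrix α β ℝ) (G : Matrix β γ ℝ)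
    (hG : Gᵀ * G = 1) : (X - X * (G * Gᵀ)) * G = 0 := by
  rw [Matrix.sub_mul, Matrix.mul_assoc X (G * Gᵀ) G, Matrix.mul_assoc G Gᵀ G, hG,
    Matrix.mul_one, sub_self]

lemma frobSq_pyth [DecidableEq γ] (K : Matrix α β ℝ) (G : Matrix β γ ℝ) (Wm : Matrix γ δ ℝ)
    (hG : Gᵀ * G = 1) :
    frobSq (K - K * ((G * Wm) * (G * Wm)ᵀ)) =
      frobSq (K - K * (G * Gᵀ)) + frobSq (K * G - K * G * (Wm * Wmᵀ)) := by
  have hDG := sub_mul_G_eq_zero K G hG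
  have hsplit : K - K * ((G * Wm) * (G * Wm)ᵀ) =
      (K - K * (G * Gᵀ)) + (K * G - K * G * (Wm * Wmᵀ)) * Gᵀ := by
    rw [Matrix.transpose_mul, Matrix.sub_mul]
    simp only [Matrix.mul_assoc]
    abel
  rw [hsplit, frobSq_add_of_orth _ _ (trace_orth_helper _ _ _ hDG), frobSq_mul_orthT _ G hG]

lemma frobSq_split [DecidableEq γ] (X : Matrix α β ℝ) (G : Matrix β γ ℝ)
    (hG : Gᵀ * G = 1) : frobSq X = frobSq (X - X * (G * Gᵀ)) + frobSq (X * G) := by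
  have hDG := sub_mul_G_eq_zero X G hG
  have hsplit : X = (X - X * (G * Gᵀ)) + (X * G) * Gᵀ := by
    rw [Matrix.mul_assoc]; abel
  conv_lhs => rw [hsplit]
  rw [frobSq_add_of_orth _ _ (trace_orth_helper _ _ _ hDG), frobSq_mul_orthT _ G hG]

lemma frobSq_mul_le [DecidableEq γ] (X : Matrix α β ℝ) (G : Matrix β γ ℝ)
    (hG : Gᵀ * G = 1) : frobSq (X * G) ≤ frobSq X := by
  rw [frobSq_split X G hG]
  exact le_add_of_nonneg_left (frobSq_nonneg _)

lemma frobSq_submatrix_id (A : Matrix α β ℝ) (e : β' ≃ β) :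
    frobSq (A.submatrix id ⇑e) = frobSq A := by
  unfold frobSq
  exact Finset.sum_congr rfl fun i _ => Fintype.sum_equiv e _ _ (fun j => rfl)

lemma conj_submatrix (M : Matrix α β ℝ) (e : α' ≃ α) :
    (M.submatrix ⇑e id)ᵀ * M.submatrix ⇑e id = Mᵀ * M := by
  rw [Matrix.transpose_submatrix]
  simpa using Matrix.submatrix_mul_equiv Mᵀ M (id : β → β) e (id : β → β)

lemma conj_one [DecidableEq γ] [DecidableEq δ] (G : Matrix β γ ℝ) (Wm : Matrix γ δ ℝ)
    (hG : Gᵀ * G = 1) (hW : Wmᵀ * Wm = 1) : (G * Wm)ᵀ * (G * Wm) = 1 := by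
  rw [Matrix.transpose_mul, Matrix.mul_assoc, ← Matrix.mul_assoc Gᵀ G Wm, hG,
    Matrix.one_mul, hW]

lemma frobSq_sum_cols {β₁ β₂ : Type*} [Fintype β₁] [Fintype β₂]
    (M : Matrix α (β₁ ⊕ β₂) ℝ) :
    frobSq M = frobSq (M.submatrix id Sum.inl) + frobSq (M.submatrix id Sum.inr) := by
  unfold frobSq
  rw [← Finset.sum_add_distrib]
  exact Finset.sum_congr rfl fun i _ => Fintype.sum_sum_type _

lemma frobSq_sub_fromBlocks {β₁ β₂ : Type*} [Fintype β₁] [Fintype β₂]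
    (M : Matrix α (β₁ ⊕ β₂) ℝ) (P₁ : Matrix β₁ β₁ ℝ) (P₂ : Matrix β₂ β₂ ℝ) :
    frobSq (M - M * Matrix.fromBlocks P₁ 0 0 P₂) =
      frobSq (M.submatrix id Sum.inl - M.submatrix id Sum.inl * P₁) +
      frobSq (M.submatrix id Sum.inr - M.submatrix id Sum.inr * P₂) := by
  rw [frobSq_sum_cols]
  congr 1 <;> · congr 1
                ext i j
                simp [Matrix.sub_apply, Matrix.submatrix_apply, Matrix.mul_apply,
                  Fintype.sum_sum_type]

lemma idx_lt {k N K a b : ℕ} (hK : K = k * N) (ha : a < k) (hb : b < N) :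
    a * N + b < K := by
  subst hK
  calc a * N + b < a * N + N := by omega
    _ = (a + 1) * N := by ring
    _ ≤ k * N := Nat.mul_le_mul_right N ha

def splitEquiv (k N K : ℕ) (hK : K = k * N) (hN : 0 < N) : Fin k × Fin N ≃ Fin K where
  toFun p := ⟨p.1.1 * N + p.2.1, idx_lt hK p.1.2 p.2.2⟩
  invFun x := (⟨x.1 / N, by
      have hx := x.2
      have hx' : x.1 < k * N := by omega
      exact (Nat.div_lt_iff_lt_mul hN).mpr hx'⟩,
    ⟨x.1 % N, Nat.mod_lt _ hN⟩)
  left_inv p := by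
    cases p with
    | mk a b =>
      have h1 : (a.1 * N + b.1) / N = a.1 := by
        rw [add_comm, Nat.add_mul_div_right _ _ hN, Nat.div_eq_of_lt b.2, zero_add]
      have h2 : (a.1 * N + b.1) % N = b.1 := by
        rw [add_comm, Nat.add_mul_mod_self_right, Nat.mod_eq_of_lt b.2]
      simp only [Prod.mk.injEq]
      exact ⟨Fin.ext h1, Fin.ext h2⟩
  right_inv x := by
    apply Fin.ext
    exact Nat.div_add_mod' x.1 N

lemma sum_partition {M : Type*} [AddCommMonoid M] (k N K : ℕ) (hK : K = k * N)
    (g : Fin K → M) :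
    ∑ x : Fin K, g x = ∑ a : Fin k, ∑ b : Fin N, g ⟨a.1 * N + b.1, idx_lt hK a.2 b.2⟩ := by
  rcases Nat.eq_zero_or_pos N with hN | hN
  · subst hN
    rw [Nat.mul_zero] at hK
    subst hK
    simp
  · calc ∑ x : Fin K, g x
        = ∑ p : Fin k × Fin N, g (splitEquiv k N K hK hN p) :=
          (Fintype.sum_equiv (splitEquiv k N K hK hN) _ g (fun p => rfl)).symm
      _ = ∑ a : Fin k, ∑ b : Fin N, g ⟨a.1 * N + b.1, idx_lt hK a.2 b.2⟩ :=
          Fintype.sum_prod_type (f := fun p => g (splitEquiv k N K hK hN p))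


end Aux


lemma frobNorm_sq {α β : Type*} [Fintype α] [Fintype β] (A : Matrix α β ℝ) :
    frobNorm A ^ 2 = frobSq A := Real.sq_sqrt (frobSq_nonneg A)

lemma frobSq_le_norm {α β α' β' : Type*} [Fintype α] [Fintype β] [Fintype α'] [Fintype β']
    {ε : ℝ} (hε : 0 ≤ ε) (X : Matrix α β ℝ) (Y : Matrix α' β' ℝ)
    (h : frobNorm X ≤ ε * frobNorm Y) : frobSq X ≤ ε ^ 2 * frobSq Y := by
  rw [← frobNorm_sq, ← frobNorm_sq, ← mul_pow]
  exact pow_le_pow_left₀ (Real.sqrt_nonneg _) h 2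

lemma blocks_frobSq {L m₀ n₀ : ℕ} (A : Matrix (Fin (2 ^ L * m₀)) (Fin (2 ^ L * n₀)) ℝ)
    (l : ℕ) (hlL : l ≤ L) :
    ∑ τ : Fin (2 ^ l), ∑ ν : Fin (2 ^ (L - l)),
      frobSq (blockOf A l τ.1 ν.1 hlL τ.2 ν.2) = frobSq A := by
  have hr : 2 ^ L * m₀ = 2 ^ l * (2 ^ (L - l) * m₀) := by
    rw [← mul_assoc, ← pow_add]; congr 2; omega
  have hc : 2 ^ L * n₀ = 2 ^ (L - l) * (2 ^ l * n₀) := by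
    rw [← mul_assoc, ← pow_add]; congr 2; omega
  have hA : frobSq A = ∑ i : Fin (2 ^ L * m₀), ∑ j, A i j ^ 2 := rfl
  rw [hA, sum_partition (2 ^ l) (2 ^ (L - l) * m₀) (2 ^ L * m₀) hr
    (fun i => ∑ j, A i j ^ 2)]
  simp only [sum_partition (2 ^ (L - l)) (2 ^ l * n₀) (2 ^ L * n₀) hc]
  refine Finset.sum_congr rfl fun τ _ => ?_
  conv_rhs => rw [Finset.sum_comm]
  rfl

/-- **Theorem 5.2 (row-wise butterfly error bound).** -/
theorem rowwise_butterfly_error_bound {L lm m₀ n₀ : ℕ}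
    (hL : 1 ≤ L) (hlm : lm ≤ L) (hm : 1 ≤ m₀) (hn : 1 ≤ n₀)
    (ε : ℝ) (hε : 0 ≤ ε)
    (A : Matrix (Fin (2 ^ L * m₀)) (Fin (2 ^ L * n₀)) ℝ)
    (r : ℕ → ℕ → ℕ → ℕ)
    (V : (l : ℕ) → (τ : ℕ) → (ν : ℕ) → Matrix (Fin (2 ^ l * n₀)) (Fin (r l τ ν)) ℝ)
    (W : (l : ℕ) → (τ : ℕ) → (ν : ℕ) →
      Matrix (Fin (r (l - 1) (τ / 2) (2 * ν)) ⊕ Fin (r (l - 1) (τ / 2) (2 * ν + 1)))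
        (Fin (r l τ ν)) ℝ)
    -- (a) level-0 row bases are orthonormal and compress the level-0 blocks with
    -- relative accuracy ε
    (hleaf : ∀ ν (hν : ν < 2 ^ (L - 0)),
      (V 0 0 ν)ᵀ * V 0 0 ν = 1 ∧
      frobNorm (blockOf A 0 0 ν (Nat.zero_le L) (Nat.two_pow_pos _) hν -
          blockOf A 0 0 ν (Nat.zero_le L) (Nat.two_pow_pos _) hν *
            (V 0 0 ν * (V 0 0 ν)ᵀ)) ≤
        ε * frobNorm (blockOf A 0 0 ν (Nat.zero_le L) (Nat.two_pow_pos _) hν))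
    -- (b) the transfer matrices are orthonormal, compress the intermediate
    -- matrices with relative accuracy ε, and define the nested bases V = G·W
    (hrec : ∀ l τ ν (hl1 : 1 ≤ l) (hl : l ≤ lm) (hτ : τ < 2 ^ l) (hν : ν < 2 ^ (L - l)),
      let G := Matrix.fromBlocks
        (V (l - 1) (τ / 2) (2 * ν)) 0 0 (V (l - 1) (τ / 2) (2 * ν + 1));
      let K' := (blockOf A l τ ν (hl.trans hlm) hτ hν).submatrix id (⇑(colSplit n₀ l hl1).symm);
      (W l τ ν)ᵀ * W l τ ν = 1 ∧
      frobNorm (K' * G - K' * G * (W l τ ν * (W l τ ν)ᵀ)) ≤ ε * frobNorm (K' * G) ∧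
      V l τ ν = (G * W l τ ν).submatrix (⇑(colSplit n₀ l hl1)) id) :
    ∀ l (hl : l ≤ lm),
      ∑ τ : Fin (2 ^ l), ∑ ν : Fin (2 ^ (L - l)),
        frobNorm (blockOf A l τ.1 ν.1 (hl.trans hlm) τ.2 ν.2 -
          blockOf A l τ.1 ν.1 (hl.trans hlm) τ.2 ν.2 *
            (V l τ.1 ν.1 * (V l τ.1 ν.1)ᵀ)) ^ 2 ≤
      ((l + 1 : ℕ) : ℝ) * ε ^ 2 * frobNorm A ^ 2 := by
  have Vorth : ∀ l, l ≤ lm → ∀ τ ν, τ < 2 ^ l → ν < 2 ^ (L - l) →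
      (V l τ ν)ᵀ * V l τ ν = 1 := by
    intro l
    induction l with
    | zero =>
      intro _ τ ν hτ hν
      have h1 : (2 : ℕ) ^ 0 = 1 := rfl
      have hτ0 : τ = 0 := by omega
      subst hτ0
      exact (hleaf ν hν).1
    | succ n ih =>
      intro hl τ ν hτ hν
      have hp1 : (2 : ℕ) ^ (n + 1) = 2 ^ n * 2 := pow_succ 2 n
      have hp2 : (2 : ℕ) ^ (L - n) = 2 ^ (L - (n + 1)) * 2 := by
        rw [show L - n = (L - (n + 1)) + 1 by omega, pow_succ]
      obtain ⟨hW, -, hVdef⟩ := hrec (n + 1) τ ν (by omega) hl hτ hν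
      have h1 : (V n (τ / 2) (2 * ν))ᵀ * V n (τ / 2) (2 * ν) = 1 :=
        ih (by omega) _ _ (by omega) (by omega)
      have h2 : (V n (τ / 2) (2 * ν + 1))ᵀ * V n (τ / 2) (2 * ν + 1) = 1 :=
        ih (by omega) _ _ (by omega) (by omega)
      have hGG : (Matrix.fromBlocks (V n (τ / 2) (2 * ν)) 0 0 (V n (τ / 2) (2 * ν + 1)))ᵀ *
          Matrix.fromBlocks (V n (τ / 2) (2 * ν)) 0 0 (V n (τ / 2) (2 * ν + 1)) = 1 := by
        rw [Matrix.fromBlocks_transpose, Matrix.fromBlocks_multiply]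
        simp [h1, h2]
      rw [hVdef, conj_submatrix]
      exact conj_one _ _ hGG hW
  intro l
  induction l with
  | zero =>
    intro hl
    simp only [frobNorm_sq]
    have hb : ∀ (τ : Fin (2 ^ 0)) (ν : Fin (2 ^ (L - 0))),
        frobSq (blockOf A 0 τ.1 ν.1 (hl.trans hlm) τ.2 ν.2 -
          blockOf A 0 τ.1 ν.1 (hl.trans hlm) τ.2 ν.2 * (V 0 τ.1 ν.1 * (V 0 τ.1 ν.1)ᵀ)) ≤
        ε ^ 2 * frobSq (blockOf A 0 τ.1 ν.1 (hl.trans hlm) τ.2 ν.2) := by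
      intro τ ν
      obtain ⟨τv, hτv⟩ := τ
      have h1 : (2 : ℕ) ^ 0 = 1 := rfl
      have hτ0 : τv = 0 := by omega
      subst hτ0
      exact frobSq_le_norm hε _ _ (hleaf ν.1 ν.2).2
    refine le_trans (Finset.sum_le_sum fun τ _ => Finset.sum_le_sum fun ν _ => hb τ ν) ?_
    have hsum : ∑ τ : Fin (2 ^ 0), ∑ ν : Fin (2 ^ (L - 0)),
        ε ^ 2 * frobSq (blockOf A 0 τ.1 ν.1 (hl.trans hlm) τ.2 ν.2) =
        ε ^ 2 * frobSq A := by
      simp only [← Finset.mul_sum]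
      rw [blocks_frobSq A 0 (hl.trans hlm)]
    rw [hsum]
    norm_num
  | succ n ih =>
    intro hl
    simp only [frobNorm_sq]
    have hnlm : n ≤ lm := by omega
    have hl1 : 1 ≤ n + 1 := by omega
    have hp1 : (2 : ℕ) ^ (n + 1) = 2 ^ n * 2 := pow_succ 2 n
    have hp2 : (2 : ℕ) ^ (L - n) = 2 ^ (L - (n + 1)) * 2 := by
      rw [show L - n = (L - (n + 1)) + 1 by omega, pow_succ]
    have hKrow : 2 ^ (L - n) * m₀ = 2 * (2 ^ (L - (n + 1)) * m₀) := by
      rw [hp2]; ring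
    have hτ2 : ∀ τ : Fin (2 ^ (n + 1)), τ.1 / 2 < 2 ^ n := fun τ => by
      have := τ.2; omega
    have hmod2 : ∀ τ : Fin (2 ^ (n + 1)), τ.1 % 2 < 2 := fun τ => Nat.mod_lt _ (by norm_num)
    have hν2l : ∀ ν : Fin (2 ^ (L - (n + 1))), 2 * ν.1 < 2 ^ (L - n) := fun ν => by
      have := ν.2; omega
    have hν2r : ∀ ν : Fin (2 ^ (L - (n + 1))), 2 * ν.1 + 1 < 2 ^ (L - n) := fun ν => by
      have := ν.2; omega
    set F : Fin (2 ^ n) → Fin (2 ^ (L - n)) → Fin 2 → ℝ := fun τ' ν' b =>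
      ∑ i : Fin (2 ^ (L - (n + 1)) * m₀), ∑ j : Fin (2 ^ n * n₀),
        (blockOf A n τ'.1 ν'.1 (hnlm.trans hlm) τ'.2 ν'.2 -
          blockOf A n τ'.1 ν'.1 (hnlm.trans hlm) τ'.2 ν'.2 *
            (V n τ'.1 ν'.1 * (V n τ'.1 ν'.1)ᵀ))
          ⟨b.1 * (2 ^ (L - (n + 1)) * m₀) + i.1, idx_lt hKrow b.2 i.2⟩ j ^ 2 with hF
    have hFsum : ∀ (τ' : Fin (2 ^ n)) (ν' : Fin (2 ^ (L - n))),
        ∑ b : Fin 2, F τ' ν' b =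
        frobSq (blockOf A n τ'.1 ν'.1 (hnlm.trans hlm) τ'.2 ν'.2 -
          blockOf A n τ'.1 ν'.1 (hnlm.trans hlm) τ'.2 ν'.2 *
            (V n τ'.1 ν'.1 * (V n τ'.1 ν'.1)ᵀ)) := by
      intro τ' ν'
      exact (sum_partition 2 (2 ^ (L - (n + 1)) * m₀) (2 ^ (L - n) * m₀) hKrow
        (fun x => ∑ j, (blockOf A n τ'.1 ν'.1 (hnlm.trans hlm) τ'.2 ν'.2 -
          blockOf A n τ'.1 ν'.1 (hnlm.trans hlm) τ'.2 ν'.2 *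
            (V n τ'.1 ν'.1 * (V n τ'.1 ν'.1)ᵀ)) x j ^ 2)).symm
    have step : ∀ (τ : Fin (2 ^ (n + 1))) (ν : Fin (2 ^ (L - (n + 1)))),
        frobSq (blockOf A (n + 1) τ.1 ν.1 (hl.trans hlm) τ.2 ν.2 -
          blockOf A (n + 1) τ.1 ν.1 (hl.trans hlm) τ.2 ν.2 *
            (V (n + 1) τ.1 ν.1 * (V (n + 1) τ.1 ν.1)ᵀ)) ≤
        F ⟨τ.1 / 2, hτ2 τ⟩ ⟨2 * ν.1, hν2l ν⟩ ⟨τ.1 % 2, hmod2 τ⟩ +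
        F ⟨τ.1 / 2, hτ2 τ⟩ ⟨2 * ν.1 + 1, hν2r ν⟩ ⟨τ.1 % 2, hmod2 τ⟩ +
        ε ^ 2 * frobSq (blockOf A (n + 1) τ.1 ν.1 (hl.trans hlm) τ.2 ν.2) := by
      intro τ ν
      obtain ⟨hW, hb, hVdef⟩ := hrec (n + 1) τ.1 ν.1 hl1 hl τ.2 ν.2
      set c : Fin (2 ^ (n + 1) * n₀) ≃ (Fin (2 ^ n * n₀) ⊕ Fin (2 ^ n * n₀)) :=
        colSplit n₀ (n + 1) hl1 with hcdef
      set V₁ := V n (τ.1 / 2) (2 * ν.1) with hV1def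
      set V₂ := V n (τ.1 / 2) (2 * ν.1 + 1) with hV2def
      set G : Matrix (Fin (2 ^ n * n₀) ⊕ Fin (2 ^ n * n₀)) _ ℝ :=
        Matrix.fromBlocks V₁ 0 0 V₂ with hGdef
      set Wm : Matrix (Fin (r n (τ.1 / 2) (2 * ν.1)) ⊕ Fin (r n (τ.1 / 2) (2 * ν.1 + 1)))
          (Fin (r (n + 1) τ.1 ν.1)) ℝ := W (n + 1) τ.1 ν.1 with hWmdef
      set Kb := blockOf A (n + 1) τ.1 ν.1 (hl.trans hlm) τ.2 ν.2 with hKbdef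
      set K' := Kb.submatrix id ⇑c.symm with hK'def
      have hW' : Wmᵀ * Wm = 1 := hW
      have hb' : frobNorm (K' * G - K' * G * (Wm * Wmᵀ)) ≤ ε * frobNorm (K' * G) := hb
      have hVdef' : V (n + 1) τ.1 ν.1 = (G * Wm).submatrix ⇑c id := hVdef
      have hV1o : V₁ᵀ * V₁ = 1 := Vorth n hnlm _ _ (hτ2 τ) (hν2l ν)
      have hV2o : V₂ᵀ * V₂ = 1 := Vorth n hnlm _ _ (hτ2 τ) (hν2r ν)
      have hGo : Gᵀ * G = 1 := by
        rw [hGdef, Matrix.fromBlocks_transpose, Matrix.fromBlocks_multiply]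
        simp [hV1o, hV2o]
      have hVV : V (n + 1) τ.1 ν.1 * (V (n + 1) τ.1 ν.1)ᵀ =
          ((G * Wm) * (G * Wm)ᵀ).submatrix ⇑c ⇑c := by
        rw [hVdef', Matrix.transpose_submatrix]
        simpa using Matrix.submatrix_mul_equiv (G * Wm) (G * Wm)ᵀ ⇑c (Equiv.refl _) ⇑c
      have hKb : Kb = K'.submatrix id ⇑c := by
        rw [hK'def, Matrix.submatrix_submatrix]
        simp
      have hWhole : Kb - Kb * (V (n + 1) τ.1 ν.1 * (V (n + 1) τ.1 ν.1)ᵀ) =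
          (K' - K' * ((G * Wm) * (G * Wm)ᵀ)).submatrix id ⇑c := by
        rw [hVV]
        conv_lhs => rw [hKb]
        rw [Matrix.submatrix_mul_equiv K' ((G * Wm) * (G * Wm)ᵀ) id c ⇑c]
        ext i j
        simp [Matrix.sub_apply, Matrix.submatrix_apply]
      have hcl : ∀ j : Fin (2 ^ n * n₀), (c.symm (Sum.inl j)).1 = j.1 := by
        intro j
        rw [hcdef]
        simp [colSplit, Nat.add_sub_cancel]
      have hcr : ∀ j : Fin (2 ^ n * n₀),
          (c.symm (Sum.inr j)).1 = 2 ^ n * n₀ + j.1 := by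
        intro j
        rw [hcdef]
        simp [colSplit, Nat.add_sub_cancel]
        omega
      set fmk : Fin (2 ^ (L - (n + 1)) * m₀) → Fin (2 ^ (L - n) * m₀) := fun i =>
        ⟨τ.1 % 2 * (2 ^ (L - (n + 1)) * m₀) + i.1, idx_lt hKrow (hmod2 τ) i.2⟩ with hfmk
      have hrowval : ∀ i : Fin (2 ^ (L - (n + 1)) * m₀),
          τ.1 * (2 ^ (L - (n + 1)) * m₀) + i.1 =
          τ.1 / 2 * (2 ^ (L - n) * m₀) + (τ.1 % 2 * (2 ^ (L - (n + 1)) * m₀) + i.1) := by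
        intro i
        have h1 : τ.1 = 2 * (τ.1 / 2) + τ.1 % 2 := by omega
        rw [hKrow]
        conv_lhs => rw [h1]
        ring
      have hcolval1 : ∀ j : Fin (2 ^ n * n₀),
          ν.1 * (2 ^ (n + 1) * n₀) + j.1 = 2 * ν.1 * (2 ^ n * n₀) + j.1 := by
        intro j; rw [pow_succ]; ring
      have hcolval2 : ∀ j : Fin (2 ^ n * n₀),
          ν.1 * (2 ^ (n + 1) * n₀) + (2 ^ n * n₀ + j.1) =
          (2 * ν.1 + 1) * (2 ^ n * n₀) + j.1 := by
        intro j; rw [pow_succ]; ring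
      set B₁ := blockOf A n (τ.1 / 2) (2 * ν.1) (hnlm.trans hlm) (hτ2 τ) (hν2l ν)
        with hB1def
      set B₂ := blockOf A n (τ.1 / 2) (2 * ν.1 + 1) (hnlm.trans hlm) (hτ2 τ) (hν2r ν)
        with hB2def
      have hK1 : K'.submatrix id Sum.inl = B₁.submatrix fmk id := by
        ext i j
        simp only [hK'def, hKbdef, hB1def, hfmk, Matrix.submatrix_apply, blockOf,
          Matrix.of_apply, id_eq]
        congr 1
        · exact Fin.ext (hrowval i)
        · apply Fin.ext
          show ν.1 * (2 ^ (n + 1) * n₀) + ((c.symm (Sum.inl j)).1 : ℕ) =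
            2 * ν.1 * (2 ^ n * n₀) + j.1
          rw [hcl j]
          exact hcolval1 j
      have hK2 : K'.submatrix id Sum.inr = B₂.submatrix fmk id := by
        ext i j
        simp only [hK'def, hKbdef, hB2def, hfmk, Matrix.submatrix_apply, blockOf,
          Matrix.of_apply, id_eq]
        congr 1
        · exact Fin.ext (hrowval i)
        · apply Fin.ext
          show ν.1 * (2 ^ (n + 1) * n₀) + ((c.symm (Sum.inr j)).1 : ℕ) =
            (2 * ν.1 + 1) * (2 ^ n * n₀) + j.1
          rw [hcr j]
          exact hcolval2 j
      have hE1 : K'.submatrix id Sum.inl - K'.submatrix id Sum.inl * (V₁ * V₁ᵀ) =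
          (B₁ - B₁ * (V₁ * V₁ᵀ)).submatrix fmk id := by
        rw [hK1]
        ext i j
        simp [Matrix.sub_apply, Matrix.submatrix_apply, Matrix.mul_apply]
      have hE2 : K'.submatrix id Sum.inr - K'.submatrix id Sum.inr * (V₂ * V₂ᵀ) =
          (B₂ - B₂ * (V₂ * V₂ᵀ)).submatrix fmk id := by
        rw [hK2]
        ext i j
        simp [Matrix.sub_apply, Matrix.submatrix_apply, Matrix.mul_apply]
      have hF1 : frobSq ((B₁ - B₁ * (V₁ * V₁ᵀ)).submatrix fmk id) =
          F ⟨τ.1 / 2, hτ2 τ⟩ ⟨2 * ν.1, hν2l ν⟩ ⟨τ.1 % 2, hmod2 τ⟩ := rfl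
      have hF2 : frobSq ((B₂ - B₂ * (V₂ * V₂ᵀ)).submatrix fmk id) =
          F ⟨τ.1 / 2, hτ2 τ⟩ ⟨2 * ν.1 + 1, hν2r ν⟩ ⟨τ.1 % 2, hmod2 τ⟩ := rfl
      have hKpart : frobSq (K' * G - K' * G * (Wm * Wmᵀ)) ≤ ε ^ 2 * frobSq Kb := by
        calc frobSq (K' * G - K' * G * (Wm * Wmᵀ)) ≤ ε ^ 2 * frobSq (K' * G) :=
              frobSq_le_norm hε _ _ hb'
          _ ≤ ε ^ 2 * frobSq K' := mul_le_mul_of_nonneg_left (frobSq_mul_le K' G hGo)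
              (sq_nonneg ε)
          _ = ε ^ 2 * frobSq Kb := by rw [hK'def, frobSq_submatrix_id Kb c.symm]
      have hGGt : G * Gᵀ = Matrix.fromBlocks (V₁ * V₁ᵀ) 0 0 (V₂ * V₂ᵀ) := by
        rw [hGdef, Matrix.fromBlocks_transpose, Matrix.fromBlocks_multiply]
        simp
      calc frobSq (Kb - Kb * (V (n + 1) τ.1 ν.1 * (V (n + 1) τ.1 ν.1)ᵀ))
          = frobSq ((K' - K' * ((G * Wm) * (G * Wm)ᵀ)).submatrix id ⇑c) := by rw [hWhole]
        _ = frobSq (K' - K' * ((G * Wm) * (G * Wm)ᵀ)) := frobSq_submatrix_id _ c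
        _ = frobSq (K' - K' * (G * Gᵀ)) + frobSq (K' * G - K' * G * (Wm * Wmᵀ)) :=
            frobSq_pyth K' G Wm hGo
        _ = (frobSq (K'.submatrix id Sum.inl - K'.submatrix id Sum.inl * (V₁ * V₁ᵀ)) +
              frobSq (K'.submatrix id Sum.inr - K'.submatrix id Sum.inr * (V₂ * V₂ᵀ))) +
            frobSq (K' * G - K' * G * (Wm * Wmᵀ)) := by
            rw [hGGt, frobSq_sub_fromBlocks]
        _ ≤ F ⟨τ.1 / 2, hτ2 τ⟩ ⟨2 * ν.1, hν2l ν⟩ ⟨τ.1 % 2, hmod2 τ⟩ +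
            F ⟨τ.1 / 2, hτ2 τ⟩ ⟨2 * ν.1 + 1, hν2r ν⟩ ⟨τ.1 % 2, hmod2 τ⟩ +
            ε ^ 2 * frobSq Kb := by
            rw [hE1, hE2, hF1, hF2]
            exact add_le_add_right hKpart _
    refine le_trans (Finset.sum_le_sum fun τ _ => Finset.sum_le_sum fun ν _ => step τ ν) ?_
    have Fcongr : ∀ (a₁ a₂ : Fin (2 ^ n)) (c₁ c₂ : Fin (2 ^ (L - n))) (d₁ d₂ : Fin 2),
        a₁.1 = a₂.1 → c₁.1 = c₂.1 → d₁.1 = d₂.1 → F a₁ c₁ d₁ = F a₂ c₂ d₂ := by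
      intro a₁ a₂ c₁ c₂ d₁ d₂ h1 h2 h3
      rw [show a₁ = a₂ from Fin.ext h1, show c₁ = c₂ from Fin.ext h2,
        show d₁ = d₂ from Fin.ext h3]
    have hCI : ∑ τ : Fin (2 ^ (n + 1)), ∑ ν : Fin (2 ^ (L - (n + 1))),
        (F ⟨τ.1 / 2, hτ2 τ⟩ ⟨2 * ν.1, hν2l ν⟩ ⟨τ.1 % 2, hmod2 τ⟩ +
         F ⟨τ.1 / 2, hτ2 τ⟩ ⟨2 * ν.1 + 1, hν2r ν⟩ ⟨τ.1 % 2, hmod2 τ⟩) =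
        ∑ τ' : Fin (2 ^ n), ∑ ν' : Fin (2 ^ (L - n)), ∑ b : Fin 2, F τ' ν' b := by
      simp only [sum_partition (2 ^ (L - (n + 1))) 2 (2 ^ (L - n)) hp2]
      rw [sum_partition (2 ^ n) 2 (2 ^ (n + 1)) hp1]
      dsimp only
      refine Finset.sum_congr rfl fun τ' _ => ?_
      rw [Finset.sum_comm]
      refine Finset.sum_congr rfl fun ν _ => ?_
      conv_rhs => rw [Fin.sum_univ_two]
      rw [Finset.sum_add_distrib]
      congr 1
      · refine Finset.sum_congr rfl fun b _ => ?_
        refine Fcongr _ _ _ _ _ _ ?_ ?_ ?_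
        · have := b.2; dsimp only; omega
        · dsimp only [Fin.val_zero]; omega
        · have := b.2; dsimp only; omega
      · refine Finset.sum_congr rfl fun b _ => ?_
        refine Fcongr _ _ _ _ _ _ ?_ ?_ ?_
        · have := b.2; dsimp only; omega
        · dsimp only [Fin.val_one]; omega
        · have := b.2; dsimp only; omega
    have hIH := ih hnlm
    simp only [frobNorm_sq] at hIH
    have hIH' : ∑ τ' : Fin (2 ^ n), ∑ ν' : Fin (2 ^ (L - n)), ∑ b : Fin 2, F τ' ν' b ≤
        ((n + 1 : ℕ) : ℝ) * ε ^ 2 * frobSq A :=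
      le_trans (le_of_eq (Finset.sum_congr rfl fun τ' _ =>
        Finset.sum_congr rfl fun ν' _ => hFsum τ' ν')) hIH
    have hKsum : ∑ τ : Fin (2 ^ (n + 1)), ∑ ν : Fin (2 ^ (L - (n + 1))),
        ε ^ 2 * frobSq (blockOf A (n + 1) τ.1 ν.1 (hl.trans hlm) τ.2 ν.2) =
        ε ^ 2 * frobSq A := by
      simp only [← Finset.mul_sum]
      rw [blocks_frobSq A (n + 1) (hl.trans hlm)]
    have hsplit : ∑ τ : Fin (2 ^ (n + 1)), ∑ ν : Fin (2 ^ (L - (n + 1))),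
        (F ⟨τ.1 / 2, hτ2 τ⟩ ⟨2 * ν.1, hν2l ν⟩ ⟨τ.1 % 2, hmod2 τ⟩ +
         F ⟨τ.1 / 2, hτ2 τ⟩ ⟨2 * ν.1 + 1, hν2r ν⟩ ⟨τ.1 % 2, hmod2 τ⟩ +
         ε ^ 2 * frobSq (blockOf A (n + 1) τ.1 ν.1 (hl.trans hlm) τ.2 ν.2)) =
        (∑ τ : Fin (2 ^ (n + 1)), ∑ ν : Fin (2 ^ (L - (n + 1))),
          (F ⟨τ.1 / 2, hτ2 τ⟩ ⟨2 * ν.1, hν2l ν⟩ ⟨τ.1 % 2, hmod2 τ⟩ +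
           F ⟨τ.1 / 2, hτ2 τ⟩ ⟨2 * ν.1 + 1, hν2r ν⟩ ⟨τ.1 % 2, hmod2 τ⟩)) +
        ∑ τ : Fin (2 ^ (n + 1)), ∑ ν : Fin (2 ^ (L - (n + 1))),
          ε ^ 2 * frobSq (blockOf A (n + 1) τ.1 ν.1 (hl.trans hlm) τ.2 ν.2) := by
      rw [← Finset.sum_add_distrib]
      exact Finset.sum_congr rfl fun τ _ => by rw [← Finset.sum_add_distrib]
    rw [hsplit, hCI, hKsum]
    have hcast : ((n + 1 + 1 : ℕ) : ℝ) * ε ^ 2 * frobSq A =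
        ((n + 1 : ℕ) : ℝ) * ε ^ 2 * frobSq A + ε ^ 2 * frobSq A := by
      push_cast; ring
    rw [hcast]
    exact add_le_add_left hIH' _
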